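/- Let H be an infinite dimensional separable Hilbert space. Then the Lie normalizer of the ideal K(H) of compact operators in B(H), namely N(K(H)) = {T ∈ B(H) : TS - ST is compact for all S ∈ B(H)}, equals ℂ·1 + K(H). -/

import Mathlib

open Filter Topology
open scoped Classical
set_option linter.unusedSectionVars false

noncomputable section

namespace LieNorm

variable {H : Type*} [NormedAddCommGroup H] [InnerProductSpace ℂ H] [CompleteSpace H]

local notation "⟪" x ", " y "⟫" => @inner ℂ _ _ x y

/-- Bessel: inner products with an orthonormal sequence tend to zero. -/
theorem bessel_tendsto {y : ℕ → H} (hy : Orthonormal ℂ y) (w : H) :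
    Tendsto (fun n => ⟪y n, w⟫) atTop (𝓝 0) := by
  rw [tendsto_zero_iff_norm_tendsto_zero]
  have h1 : Tendsto (fun n => ‖⟪y n, w⟫‖ ^ 2) atTop (𝓝 0) :=
    (hy.inner_products_summable w).tendsto_atTop_zero
  have h2 := (Real.continuous_sqrt.tendsto 0).comp h1
  simpa [Function.comp_def, Real.sqrt_sq (norm_nonneg _)] using h2

theorem summable_coeff_smul {x y : ℕ → H} (hx : Orthonormal ℂ x) (hy : Orthonormal ℂ y)
    (z : H) : Summable fun n => ⟪x n, z⟫ • y n := by
  have := (hy.orthogonalFamily.summable_iff_norm_sq_summable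
    (fun n => (⟪x n, z⟫ : ℂ))).2 (hx.inner_products_summable z)
  simpa [LinearIsometry.toSpanSingleton_apply] using this


section V
variable {x y : ℕ → H} (hx : Orthonormal ℂ x) (hy : Orthonormal ℂ y)

/-- The bounded operator sending `x n` to `y n` and vanishing on the orthogonal
complement of the closed span of the `x n`. -/
def V (hx : Orthonormal ℂ x) (hy : Orthonormal ℂ y) : H →L[ℂ] H :=
  LinearMap.mkContinuous
    { toFun := fun z => ∑' n, ⟪x n, z⟫ • y n
      map_add' := fun a b => by
        rw [← Summable.tsum_add (summable_coeff_smul hx hy a) (summable_coeff_smul hx hy b)]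
        simp [inner_add_right, add_smul]
      map_smul' := fun c a => by
        simp only [inner_smul_right, RingHom.id_apply]
        rw [← tsum_const_smul'' c]
        simp [smul_smul] } 1
    (by
      intro z
      simp only [LinearMap.coe_mk, AddHom.coe_mk, one_mul]
      have hsum := summable_coeff_smul hx hy z
      have hnorm : ∀ s : Finset ℕ, ‖∑ n ∈ s, ⟪x n, z⟫ • y n‖ ≤ ‖z‖ := by
        intro s
        have hsq : ‖∑ n ∈ s, ⟪x n, z⟫ • y n‖ ^ 2 = ∑ n ∈ s, ‖⟪x n, z⟫‖ ^ 2 := by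
          have : (⟪∑ n ∈ s, ⟪x n, z⟫ • y n, ∑ n ∈ s, ⟪x n, z⟫ • y n⟫ : ℂ)
              = ∑ n ∈ s, (‖⟪x n, z⟫‖ : ℂ) ^ 2 := by
            rw [sum_inner]
            refine Finset.sum_congr rfl fun n hn => ?_
            rw [inner_smul_left, hy.inner_right_sum _ hn, RCLike.conj_mul]
            norm_cast
          rw [@inner_self_eq_norm_sq_to_K ℂ] at this
          have h3 := congrArg Complex.re this
          simpa [← Complex.ofReal_pow] using h3
        have hb := hx.sum_inner_products_le z (s := s)
        nlinarith [norm_nonneg (∑ n ∈ s, ⟪x n, z⟫ • y n), norm_nonneg z]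
      have hlim : Tendsto (fun s : Finset ℕ => ‖∑ n ∈ s, ⟪x n, z⟫ • y n‖) atTop
          (𝓝 ‖∑' n, ⟪x n, z⟫ • y n‖) := (continuous_norm.tendsto _).comp hsum.hasSum
      exact le_of_tendsto hlim (Eventually.of_forall hnorm))

theorem V_apply (z : H) : V hx hy z = ∑' n, ⟪x n, z⟫ • y n := rfl

theorem V_apply_x (n : ℕ) : V hx hy (x n) = y n := by
  rw [V_apply]
  rw [tsum_eq_single n]
  · rw [orthonormal_iff_ite.1 hx]
    simp
  · intro m hm
    rw [orthonormal_iff_ite.1 hx]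
    simp [hm]

theorem inner_V (w z : H) : ⟪w, V hx hy z⟫ = ∑' n, ⟪x n, z⟫ * ⟪w, y n⟫ := by
  rw [V_apply]
  have := (innerSL ℂ w).map_tsum (summable_coeff_smul hx hy z)
  simpa [inner_smul_right] using this

theorem inner_y_V (n : ℕ) (z : H) : ⟪y n, V hx hy z⟫ = ⟪x n, z⟫ := by
  rw [inner_V]
  rw [tsum_eq_single n]
  · rw [orthonormal_iff_ite.1 hy]; simp
  · intro m hm
    rw [orthonormal_iff_ite.1 hy]
    simp [Ne.symm hm]

end V


/-- A compact operator pairs orthonormal sequences to zero. -/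
theorem tendsto_inner_compact {C : H →L[ℂ] H} (hC : IsCompactOperator ⇑C)
    {x y : ℕ → H} (hx : Orthonormal ℂ x) (hy : Orthonormal ℂ y) :
    Tendsto (fun n => ⟪y n, C (x n)⟫) atTop (𝓝 0) := by
  obtain ⟨K, hK, hKmem⟩ := hC
  obtain ⟨r, hr, hball⟩ := Metric.mem_nhds_iff.1 hKmem
  set c0 : ℂ := ((r / 2 : ℝ) : ℂ) with hc0
  have hc0ne : c0 ≠ 0 := by
    simp [hc0]
    positivity
  have hmemK : ∀ n, C (c0 • x n) ∈ K := by
    intro n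
    apply hball
    rw [Metric.mem_ball, dist_zero_right, norm_smul, hx.1 n, mul_one, hc0,
      Complex.norm_real, Real.norm_eq_abs, abs_of_pos (by positivity : (0:ℝ) < r / 2)]
    linarith
  apply tendsto_of_subseq_tendsto
  intro ns hns
  obtain ⟨w, hwK, φ, hφ, hφtendsto⟩ := hK.tendsto_subseq (x := fun k => C (c0 • x (ns k))) (fun k => hmemK (ns k))
  refine ⟨φ, ?_⟩
  have key : Tendsto (fun k => ⟪y (ns (φ k)), C (c0 • x (ns (φ k)))⟫) atTop (𝓝 0) := by
    have h1 : Tendsto (fun k => ⟪y (ns (φ k)), C (c0 • x (ns (φ k))) - w⟫) atTop (𝓝 0) := by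
      rw [tendsto_zero_iff_norm_tendsto_zero]
      have hb : ∀ k, ‖⟪y (ns (φ k)), C (c0 • x (ns (φ k))) - w⟫‖
          ≤ ‖C (c0 • x (ns (φ k))) - w‖ := by
        intro k
        calc ‖⟪y (ns (φ k)), C (c0 • x (ns (φ k))) - w⟫‖
            ≤ ‖y (ns (φ k))‖ * ‖C (c0 • x (ns (φ k))) - w‖ := norm_inner_le_norm _ _
          _ = ‖C (c0 • x (ns (φ k))) - w‖ := by rw [hy.1]; ring
      have hd : Tendsto (fun k => ‖C (c0 • x (ns (φ k))) - w‖) atTop (𝓝 0) := by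
        rw [← tendsto_zero_iff_norm_tendsto_zero]
        exact tendsto_sub_nhds_zero_iff.2 hφtendsto
      exact squeeze_zero (fun k => norm_nonneg _) hb hd
    have h2 : Tendsto (fun k => ⟪y (ns (φ k)), w⟫) atTop (𝓝 0) :=
      (bessel_tendsto hy w).comp ((hns.comp hφ.tendsto_atTop))
    have := h1.add h2
    simpa [inner_sub_right] using this
  have heq : ∀ k, ⟪y (ns (φ k)), C (x (ns (φ k)))⟫
      = c0⁻¹ * ⟪y (ns (φ k)), C (c0 • x (ns (φ k)))⟫ := by
    intro k
    rw [map_smul, inner_smul_right, ← mul_assoc, inv_mul_cancel₀ hc0ne, one_mul]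
  simp only [heq]
  simpa using key.const_mul c0⁻¹

variable {T : H →L[ℂ] H}

/-- Diagonal coherence: diagonals of `T` along any two orthonormal sequences agree
asymptotically. -/
theorem diag_diff_tendsto (h : ∀ S : H →L[ℂ] H, IsCompactOperator ⇑(T * S - S * T))
    {x y : ℕ → H} (hx : Orthonormal ℂ x) (hy : Orthonormal ℂ y) :
    Tendsto (fun n => ⟪y n, T (y n)⟫ - ⟪x n, T (x n)⟫) atTop (𝓝 0) := by
  have hA := tendsto_inner_compact (h (V hx hy)) hx hy
  have heq : ∀ n, ⟪y n, (T * V hx hy - V hx hy * T) (x n)⟫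
      = ⟪y n, T (y n)⟫ - ⟪x n, T (x n)⟫ := by
    intro n
    rw [ContinuousLinearMap.sub_apply, inner_sub_right, ContinuousLinearMap.mul_apply,
      ContinuousLinearMap.mul_apply, V_apply_x, inner_y_V]
  simpa only [heq] using hA

/-- Off-diagonal decay: cross terms of `T` between jointly orthonormal sequences vanish. -/
theorem offdiag_tendsto (h : ∀ S : H →L[ℂ] H, IsCompactOperator ⇑(T * S - S * T))
    {x y : ℕ → H} (hx : Orthonormal ℂ x) (hy : Orthonormal ℂ y)
    (hxy : ∀ n m, ⟪x n, y m⟫ = 0) :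
    Tendsto (fun n => ⟪y n, T (x n)⟫) atTop (𝓝 0) := by
  have hA := tendsto_inner_compact (h (V hy hx)) hy hy
  have heq : ∀ n, ⟪y n, (T * V hy hx - V hy hx * T) (y n)⟫ = ⟪y n, T (x n)⟫ := by
    intro n
    rw [ContinuousLinearMap.sub_apply, inner_sub_right, ContinuousLinearMap.mul_apply,
      ContinuousLinearMap.mul_apply, V_apply_x]
    have : ⟪y n, V hy hx (T (y n))⟫ = 0 := by
      rw [inner_V]
      have : ∀ m, ⟪y m, T (y n)⟫ * ⟪y n, x m⟫ = 0 := by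
        intro m
        rw [show (⟪y n, x m⟫ : ℂ) = starRingEnd ℂ ⟪x m, y n⟫ from (inner_conj_symm _ _).symm,
          hxy m n]
        simp
      simp only [this]
      exact tsum_zero
    rw [this, sub_zero]
  simpa only [heq] using hA


/-- In an infinite-dimensional space, we can find a unit vector orthogonal to any
finite set of vectors. -/
theorem exists_unit_orth (hinf : ¬ FiniteDimensional ℂ H) (s : Finset H) :
    ∃ v : H, ‖v‖ = 1 ∧ ∀ u ∈ s, ⟪u, v⟫ = 0 := by
  haveI hfin : FiniteDimensional ℂ (Submodule.span ℂ (s : Set H)) :=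
    FiniteDimensional.span_of_finite ℂ (s.finite_toSet)
  have hFne : Submodule.span ℂ (s : Set H) ≠ ⊤ := by
    intro htop
    rw [htop] at hfin
    exact hinf Submodule.topEquiv.finiteDimensional
  have hbot : (Submodule.span ℂ (s : Set H))ᗮ ≠ ⊥ := by
    rw [Ne, Submodule.orthogonal_eq_bot_iff]
    exact hFne
  obtain ⟨v, hvF, hvne⟩ := Submodule.exists_mem_ne_zero_of_ne_bot hbot
  have hvpos : (0:ℝ) < ‖v‖ := norm_pos_iff.2 hvne
  refine ⟨(‖v‖⁻¹ : ℝ) • v, ?_, ?_⟩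
  · rw [norm_smul, Real.norm_eq_abs, abs_of_pos (inv_pos.2 hvpos)]
    field_simp
  · intro u hu
    have : (‖v‖⁻¹ : ℝ) • v ∈ (Submodule.span ℂ (s : Set H))ᗮ := Submodule.smul_mem _ _ hvF
    exact (Submodule.mem_orthogonal _ _).1 this u (Submodule.subset_span hu)

/-- There is an orthonormal sequence in an infinite-dimensional Hilbert space. -/
theorem exists_orthonormal_seq (hinf : ¬ FiniteDimensional ℂ H) :
    ∃ e : ℕ → H, Orthonormal ℂ e := by
  set pick : Finset H → H := fun s => (exists_unit_orth hinf s).choose with hpick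
  set f : ℕ → Finset H := fun n => Nat.rec ∅ (fun _ s => insert (pick s) s) n with hf
  have hfsucc : ∀ n, f (n + 1) = insert (pick (f n)) (f n) := fun n => rfl
  set e : ℕ → H := fun n => pick (f n) with he
  have hnorm : ∀ n, ‖e n‖ = 1 := fun n => (exists_unit_orth hinf (f n)).choose_spec.1
  have horth : ∀ n, ∀ u ∈ f n, ⟪u, e n⟫ = 0 :=
    fun n => (exists_unit_orth hinf (f n)).choose_spec.2
  have hmono : ∀ {m n : ℕ}, m ≤ n → f m ⊆ f n := by
    intro m n hmn
    induction n with
    | zero => simp_all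
    | succ k ih =>
      rcases Nat.lt_or_ge m (k+1) with hlt | hge
      · refine (ih (Nat.lt_succ_iff.1 hlt)).trans ?_
        rw [hfsucc]; exact Finset.subset_insert _ _
      · have : m = k + 1 := le_antisymm hmn hge
        subst this; rfl
  have hmem : ∀ {m n : ℕ}, m < n → e m ∈ f n := by
    intro m n hmn
    apply hmono hmn
    rw [hfsucc]; exact Finset.mem_insert_self _ _
  refine ⟨e, orthonormal_iff_ite.2 fun i j => ?_⟩
  rcases lt_trichotomy i j with hij | hij | hij
  · rw [if_neg hij.ne, horth j _ (hmem hij)]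
  · subst hij
    rw [if_pos rfl, @inner_self_eq_norm_sq_to_K ℂ, hnorm]
    norm_num
  · rw [if_neg hij.ne', ← inner_conj_symm, horth i _ (hmem hij)]
    simp

variable {T : H →L[ℂ] H}

/-- The diagonal of `T` along every orthonormal sequence converges, with common limit. -/
theorem exists_diag_limit (h : ∀ S : H →L[ℂ] H, IsCompactOperator ⇑(T * S - S * T))
    (hinf : ¬ FiniteDimensional ℂ H) :
    ∃ c : ℂ, ∀ x : ℕ → H, Orthonormal ℂ x →
      Tendsto (fun n => ⟪x n, T (x n)⟫) atTop (𝓝 c) := by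
  obtain ⟨e, he⟩ := exists_orthonormal_seq (H := H) hinf
  set lam : ℕ → ℂ := fun n => ⟪e n, T (e n)⟫ with hlam
  have hcauchy : CauchySeq lam := by
    by_contra hc
    rw [Metric.cauchySeq_iff] at hc
    push_neg at hc
    obtain ⟨ε, hε, hc⟩ := hc
    -- build two strictly monotone sequences witnessing non-Cauchyness
    set g : ℕ → ℕ × ℕ := fun k => Nat.rec
      (((hc 0).choose, (hc 0).choose_spec.2.choose))
      (fun _ p => ((hc (max p.1 p.2 + 1)).choose,
        (hc (max p.1 p.2 + 1)).choose_spec.2.choose)) k with hg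
    have hg0 : g 0 = ((hc 0).choose, (hc 0).choose_spec.2.choose) := rfl
    have hgsucc : ∀ k, g (k+1) = ((hc (max (g k).1 (g k).2 + 1)).choose,
        (hc (max (g k).1 (g k).2 + 1)).choose_spec.2.choose) := fun k => rfl
    have hspec : ∀ N, N ≤ (hc N).choose ∧ N ≤ (hc N).choose_spec.2.choose ∧
        ε ≤ dist (lam (hc N).choose) (lam (hc N).choose_spec.2.choose) := by
      intro N
      have h1 := (hc N).choose_spec.1
      have h2 := (hc N).choose_spec.2.choose_spec
      exact ⟨h1, h2.1, h2.2⟩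
    have hstep : ∀ k, (g k).1 < (g (k+1)).1 ∧ (g k).2 < (g (k+1)).2 ∧
        ε ≤ dist (lam (g (k+1)).1) (lam (g (k+1)).2) := by
      intro k
      rw [hgsucc k]
      obtain ⟨h1, h2, h3⟩ := hspec (max (g k).1 (g k).2 + 1)
      refine ⟨?_, ?_, h3⟩
      · exact lt_of_lt_of_le (Nat.lt_succ_of_le (le_max_left _ _)) h1
      · exact lt_of_lt_of_le (Nat.lt_succ_of_le (le_max_right _ _)) h2
    set φ : ℕ → ℕ := fun k => (g (k+1)).1 with hφ
    set ψ : ℕ → ℕ := fun k => (g (k+1)).2 with hψ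
    have hφmono : StrictMono φ := strictMono_nat_of_lt_succ fun k => (hstep (k+1)).1
    have hψmono : StrictMono ψ := strictMono_nat_of_lt_succ fun k => (hstep (k+1)).2.1
    have hdist : ∀ k, ε ≤ dist (lam (φ k)) (lam (ψ k)) := fun k => (hstep k).2.2
    have hx : Orthonormal ℂ (e ∘ φ) := he.comp φ hφmono.injective
    have hy : Orthonormal ℂ (e ∘ ψ) := he.comp ψ hψmono.injective
    have := diag_diff_tendsto h hx hy
    have hev : ∀ᶠ k in atTop,
        ‖⟪(e ∘ ψ) k, T ((e ∘ ψ) k)⟫ - ⟪(e ∘ φ) k, T ((e ∘ φ) k)⟫‖ < ε := by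
      have := (tendsto_zero_iff_norm_tendsto_zero.1 this)
      exact this.eventually_lt_const hε |>.mono (by intro k hk; simpa using hk)
    obtain ⟨k, hk⟩ := hev.exists
    have := hdist k
    rw [dist_eq_norm] at this
    have : ε ≤ ‖⟪(e ∘ ψ) k, T ((e ∘ ψ) k)⟫ - ⟪(e ∘ φ) k, T ((e ∘ φ) k)⟫‖ := by
      rw [norm_sub_rev]
      exact this
    linarith
  obtain ⟨c, hc⟩ := cauchySeq_tendsto_of_complete hcauchy
  refine ⟨c, fun x hx => ?_⟩
  have hdiff := diag_diff_tendsto h he hx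
  have := hdiff.add hc
  simpa [hlam] using this


/-- An operator whose range lies in a finite-dimensional subspace is compact. -/
theorem isCompactOperator_of_finiteRange (f : H →L[ℂ] H) (F : Submodule ℂ H)
    [FiniteDimensional ℂ F] (h : ∀ z, f z ∈ F) : IsCompactOperator ⇑f := by
  set g : H →L[ℂ] F := f.codRestrict F h with hg
  have hbdd : Bornology.IsBounded (⇑g '' Metric.ball 0 1) := by
    have : ⇑g '' Metric.ball 0 1 ⊆ Metric.closedBall 0 ‖g‖ := by
      rintro _ ⟨z, hz, rfl⟩
      rw [Metric.mem_closedBall, dist_zero_right]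
      calc ‖g z‖ ≤ ‖g‖ * ‖z‖ := g.le_opNorm z
        _ ≤ ‖g‖ * 1 := by
            have h2 := Metric.mem_ball.1 hz
            rw [dist_zero_right] at h2
            exact mul_le_mul_of_nonneg_left h2.le (norm_nonneg g)
        _ = ‖g‖ := mul_one _
    exact Bornology.IsBounded.subset (Metric.isBounded_closedBall) this
  have hcpt : IsCompact (closure (⇑g '' Metric.ball 0 1)) := hbdd.isCompact_closure
  refine ⟨Subtype.val '' closure (⇑g '' Metric.ball 0 1),
    hcpt.image continuous_subtype_val, ?_⟩
  have : Metric.ball (0:H) 1 ⊆ ⇑f ⁻¹' (Subtype.val '' closure (⇑g '' Metric.ball 0 1)) := by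
    intro z hz
    exact ⟨g z, subset_closure ⟨z, hz, rfl⟩, rfl⟩
  exact Filter.mem_of_superset (Metric.ball_mem_nhds 0 one_pos) this

/-- If an operator is not compact, some `δ > 0` of norm survives on unit vectors orthogonal
to any finite set. -/
theorem exists_delta_of_not_compact {A : H →L[ℂ] H} (hA : ¬ IsCompactOperator ⇑A) :
    ∃ δ : ℝ, 0 < δ ∧ ∀ s : Finset H, ∃ v : H,
      ‖v‖ = 1 ∧ (∀ u ∈ s, ⟪u, v⟫ = 0) ∧ δ ≤ ‖A v‖ := by
  by_contra hcon
  push_neg at hcon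
  apply hA
  -- for each k, get a finset sₖ violating the property with δ = 1/(k+1)
  have hstep : ∀ k : ℕ, ∃ s : Finset H, ∀ v : H,
      ‖v‖ = 1 → (∀ u ∈ s, ⟪u, v⟫ = 0) → ‖A v‖ < 1 / (k + 1) := by
    intro k
    exact hcon (1 / (k+1)) (by positivity)
  choose s hs using hstep
  set F : ℕ → Submodule ℂ H := fun k => Submodule.span ℂ ((s k : Set H)) with hF
  haveI : ∀ k, FiniteDimensional ℂ (F k) :=
    fun k => FiniteDimensional.span_of_finite ℂ (s k).finite_toSet
  haveI : ∀ k, CompleteSpace (F k) := fun k => FiniteDimensional.complete ℂ (F k)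
  set P : ℕ → (H →L[ℂ] H) := fun k => (F k).subtypeL.comp (Submodule.orthogonalProjectionOnto (F k)) with hP
  set u : ℕ → (H →L[ℂ] H) := fun k => A.comp (P k) with hu
  have hucompact : ∀ k, IsCompactOperator ⇑(u k) := by
    intro k
    haveI : FiniteDimensional ℂ ((F k).map (A : H →ₗ[ℂ] H)) := Module.Finite.map _ _
    refine isCompactOperator_of_finiteRange _ ((F k).map (A : H →ₗ[ℂ] H)) fun z => ?_
    exact Submodule.mem_map_of_mem (by simp [hP])
  -- the key bound : ‖A - u k‖ ≤ 1/(k+1)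
  have hbound : ∀ k, ‖A - u k‖ ≤ 1 / (k + 1) := by
    intro k
    refine ContinuousLinearMap.opNorm_le_bound _ (by positivity) fun z => ?_
    have hzw : (A - u k) z = A (z - P k z) := by
      simp [hu, hP, map_sub]
    rw [hzw]
    have hwF : z - P k z ∈ (F k)ᗮ := Submodule.sub_starProjection_mem_orthogonal (K := F k) z
    have hwnorm : ‖z - P k z‖ ≤ ‖z‖ := by
      have h1 : z - P k z = (Submodule.orthogonalProjectionOnto ((F k)ᗮ) z : H) :=
        (Submodule.starProjection_orthogonal_val (K := F k) z).symm
      rw [h1]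
      calc ‖(Submodule.orthogonalProjectionOnto ((F k)ᗮ) z : H)‖
          ≤ ‖Submodule.orthogonalProjectionOnto ((F k)ᗮ)‖ * ‖z‖ :=
            (Submodule.orthogonalProjectionOnto ((F k)ᗮ)).le_opNorm z
        _ ≤ 1 * ‖z‖ := mul_le_mul_of_nonneg_right (Submodule.orthogonalProjectionOnto_norm_le _) (norm_nonneg _)
        _ = ‖z‖ := one_mul _
    rcases eq_or_ne (z - P k z) 0 with hzero | hne
    · rw [hzero]
      simp
      positivity
    · have hwpos : (0:ℝ) < ‖z - P k z‖ := norm_pos_iff.2 hne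
      set v : H := (‖z - P k z‖⁻¹ : ℝ) • (z - P k z) with hv
      have hvnorm : ‖v‖ = 1 := by
        rw [hv, norm_smul, Real.norm_eq_abs, abs_of_pos (inv_pos.2 hwpos)]
        field_simp
      have hvorth : ∀ w ∈ s k, ⟪w, v⟫ = 0 := by
        intro w hw
        have : v ∈ (F k)ᗮ := Submodule.smul_mem _ _ hwF
        exact (Submodule.mem_orthogonal _ _).1 this w (Submodule.subset_span hw)
      have := hs k v hvnorm hvorth
      have hAz : ‖A (z - P k z)‖ = ‖z - P k z‖ * ‖A v‖ := by
        rw [hv, ContinuousLinearMap.map_smul_of_tower, norm_smul, Real.norm_eq_abs,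
          abs_of_pos (inv_pos.2 hwpos)]
        field_simp
      rw [hAz]
      calc ‖z - P k z‖ * ‖A v‖ ≤ ‖z - P k z‖ * (1 / (k+1)) :=
            mul_le_mul_of_nonneg_left this.le (norm_nonneg _)
        _ ≤ ‖z‖ * (1 / (k+1)) := mul_le_mul_of_nonneg_right hwnorm (by positivity)
        _ = 1 / (k+1) * ‖z‖ := mul_comm _ _
  have htendsto : Tendsto u atTop (𝓝 A) := by
    rw [tendsto_iff_norm_sub_tendsto_zero]
    refine squeeze_zero (g := fun k : ℕ => 1 / (k+1)) (fun k => norm_nonneg _)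
      (fun k => ?_) tendsto_one_div_add_atTop_nhds_zero_nat
    rw [norm_sub_rev]
    exact hbound k
  exact isCompactOperator_of_tendsto htendsto (Eventually.of_forall hucompact)


set_option maxHeartbeats 1000000 in
/-- Hard direction: an operator essentially commuting with everything is scalar plus compact. -/
theorem scalar_add_compact_of_commutators_compact (hinf : ¬ FiniteDimensional ℂ H)
    {T : H →L[ℂ] H} (h : ∀ S : H →L[ℂ] H, IsCompactOperator ⇑(T * S - S * T)) :
    ∃ (c : ℂ) (K : H →L[ℂ] H), IsCompactOperator ⇑K ∧ T = c • (1 : H →L[ℂ] H) + K := by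
  obtain ⟨c, hc⟩ := exists_diag_limit h hinf
  refine ⟨c, T - c • 1, ?_, by abel⟩
  by_contra hAcomp
  obtain ⟨δ, hδ, crit⟩ := exists_delta_of_not_compact hAcomp
  set A : H →L[ℂ] H := T - c • (1 : H →L[ℂ] H) with hA
  set adj : H →L[ℂ] H := ContinuousLinearMap.adjoint A with hadj
  set pickx : Finset H → H := fun s => (crit s).choose with hpickx
  set uvec : H → H := fun x => A x - ⟪x, A x⟫ • x with huvec
  set picky : Finset H → H → H := fun s x =>
    if uvec x = 0 then (exists_unit_orth hinf (insert x s)).choose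
    else ((‖uvec x‖ : ℂ))⁻¹ • uvec x with hpicky
  set sets : ℕ → Finset H := fun n => Nat.rec ∅
    (fun _ t => t ∪ {pickx t, picky t (pickx t), adj (pickx t), adj (picky t (pickx t))}) n
    with hsets
  set xs : ℕ → H := fun n => pickx (sets n) with hxs
  set ys : ℕ → H := fun n => picky (sets n) (xs n) with hys
  have hsetssucc : ∀ n, sets (n+1)
      = sets n ∪ {xs n, ys n, adj (xs n), adj (ys n)} := fun n => rfl
  have hmono : ∀ {m n : ℕ}, m ≤ n → sets m ⊆ sets n := by
    intro m n hmn
    induction n with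
    | zero => simp_all
    | succ k ih =>
      rcases Nat.lt_or_ge m (k+1) with hlt | hge
      · refine (ih (Nat.lt_succ_iff.1 hlt)).trans ?_
        rw [hsetssucc]; exact Finset.subset_union_left
      · have : m = k + 1 := le_antisymm hmn hge
        subst this; rfl
  have hmem : ∀ {m n : ℕ}, m < n →
      xs m ∈ sets n ∧ ys m ∈ sets n ∧ adj (xs m) ∈ sets n ∧ adj (ys m) ∈ sets n := by
    intro m n hmn
    have hsub := hmono hmn
    rw [hsetssucc] at hsub
    refine ⟨hsub ?_, hsub ?_, hsub ?_, hsub ?_⟩ <;>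
      · apply Finset.mem_union_right
        simp
  have hxnorm : ∀ n, ‖xs n‖ = 1 := fun n => (crit (sets n)).choose_spec.1
  have hxorth : ∀ n, ∀ u ∈ sets n, ⟪u, xs n⟫ = 0 :=
    fun n => (crit (sets n)).choose_spec.2.1
  have hxA : ∀ n, δ ≤ ‖A (xs n)‖ := fun n => (crit (sets n)).choose_spec.2.2
  -- basic facts about `ys`
  have hxx : ∀ n, (⟪xs n, xs n⟫ : ℂ) = 1 := by
    intro n
    rw [@inner_self_eq_norm_sq_to_K ℂ, hxnorm]
    norm_num
  have hinner_u : ∀ n (v : H), ⟪v, uvec (xs n)⟫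
      = ⟪adj v, xs n⟫ - ⟪xs n, A (xs n)⟫ * ⟪v, xs n⟫ := by
    intro n v
    simp only [huvec]
    simp only [inner_sub_right, inner_smul_right]
    rw [ContinuousLinearMap.adjoint_inner_left]
  have hyorth : ∀ n v, (v = xs n ∨ (v ∈ sets n ∧ adj v ∈ sets n)) → ⟪v, ys n⟫ = 0 := by
    intro n v hcase
    simp only [hys, hpicky]
    by_cases hu : uvec (xs n) = 0
    · rw [if_pos hu]
      refine (exists_unit_orth hinf (insert (xs n) (sets n))).choose_spec.2 v ?_
      rcases hcase with rfl | ⟨hvmem, _⟩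
      · exact Finset.mem_insert_self _ _
      · exact Finset.mem_insert_of_mem hvmem
    · rw [if_neg hu, inner_smul_right]
      have hz : (⟪v, uvec (xs n)⟫ : ℂ) = 0 := by
        rw [hinner_u]
        rcases hcase with rfl | ⟨hvmem, hadjmem⟩
        · rw [hxx, mul_one]
          have : (⟪adj (xs n), xs n⟫ : ℂ) = ⟪xs n, A (xs n)⟫ :=
            ContinuousLinearMap.adjoint_inner_left _ _ _
          rw [this, sub_self]
        · rw [hxorth n _ hadjmem, hxorth n _ hvmem, mul_zero, sub_self]
      rw [hz, mul_zero]
  have hynorm : ∀ n, ‖ys n‖ = 1 := by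
    intro n
    simp only [hys, hpicky]
    by_cases hu : uvec (xs n) = 0
    · rw [if_pos hu]
      exact (exists_unit_orth hinf (insert (xs n) (sets n))).choose_spec.1
    · have hupos : (0:ℝ) < ‖uvec (xs n)‖ := norm_pos_iff.2 hu
      rw [if_neg hu, norm_smul, norm_inv, Complex.norm_real, Real.norm_eq_abs,
        abs_of_pos hupos]
      field_simp
  have hxortho : Orthonormal ℂ xs := by
    refine orthonormal_iff_ite.2 fun i j => ?_
    rcases lt_trichotomy i j with hij | hij | hij
    · rw [if_neg hij.ne]; exact hxorth j _ (hmem hij).1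
    · subst hij; rw [if_pos rfl, hxx]
    · rw [if_neg hij.ne', ← inner_conj_symm, hxorth i _ (hmem hij).1]; simp
  have hyortho : Orthonormal ℂ ys := by
    refine orthonormal_iff_ite.2 fun i j => ?_
    rcases lt_trichotomy i j with hij | hij | hij
    · rw [if_neg hij.ne]
      exact hyorth j _ (Or.inr ⟨(hmem hij).2.1, (hmem hij).2.2.2⟩)
    · subst hij
      rw [if_pos rfl, @inner_self_eq_norm_sq_to_K ℂ, hynorm]
      norm_num
    · rw [if_neg hij.ne', ← inner_conj_symm,
        hyorth i _ (Or.inr ⟨(hmem hij).2.1, (hmem hij).2.2.2⟩)]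
      simp
  have hxy : ∀ n m, ⟪xs n, ys m⟫ = 0 := by
    intro n m
    rcases lt_trichotomy n m with hnm | hnm | hnm
    · exact hyorth m _ (Or.inr ⟨(hmem hnm).1, (hmem hnm).2.2.1⟩)
    · subst hnm; exact hyorth n _ (Or.inl rfl)
    · rw [← inner_conj_symm, hxorth n _ (hmem hnm).2.1]; simp
  have hdiag : Tendsto (fun n => (⟪xs n, A (xs n)⟫ : ℂ)) atTop (𝓝 0) := by
    have h1 := hc xs hxortho
    have h2 : ∀ n, (⟪xs n, A (xs n)⟫ : ℂ) = ⟪xs n, T (xs n)⟫ - c := by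
      intro n
      rw [hA]
      simp only [ContinuousLinearMap.sub_apply, ContinuousLinearMap.smul_apply,
        ContinuousLinearMap.one_apply, inner_sub_right, inner_smul_right]
      rw [hxx n, mul_one]
    simp only [h2]
    simpa using h1.sub_const c
  have hoffA : Tendsto (fun n => (⟪ys n, A (xs n)⟫ : ℂ)) atTop (𝓝 0) := by
    have h1 := offdiag_tendsto h hxortho hyortho hxy
    have h2 : ∀ n, (⟪ys n, A (xs n)⟫ : ℂ) = ⟪ys n, T (xs n)⟫ := by
      intro n
      rw [hA]
      have hz : (⟪ys n, xs n⟫ : ℂ) = 0 := by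
        rw [← inner_conj_symm, hxy n n]; simp
      simp only [ContinuousLinearMap.sub_apply, ContinuousLinearMap.smul_apply,
        ContinuousLinearMap.one_apply, inner_sub_right, inner_smul_right]
      rw [hz, mul_zero, sub_zero]
    simp only [h2]
    exact h1
  have hev1 : ∀ᶠ n in atTop, ‖(⟪xs n, A (xs n)⟫ : ℂ)‖ < δ / 2 :=
    (tendsto_zero_iff_norm_tendsto_zero.1 hdiag).eventually_lt_const (by positivity)
  have hev2 : ∀ᶠ n in atTop, ‖(⟪ys n, A (xs n)⟫ : ℂ)‖ < δ / 2 :=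
    (tendsto_zero_iff_norm_tendsto_zero.1 hoffA).eventually_lt_const (by positivity)
  obtain ⟨n, h1, h2⟩ := (hev1.and hev2).exists
  -- the residual vector is nonzero
  have hune : uvec (xs n) ≠ 0 := by
    intro hu0
    have h0 := hu0
    simp only [huvec] at h0
    have hAxn : A (xs n) = ⟪xs n, A (xs n)⟫ • xs n := sub_eq_zero.1 h0
    have hnorm2 : ‖A (xs n)‖ = ‖(⟪xs n, A (xs n)⟫ : ℂ)‖ := by
      conv_lhs => rw [hAxn]
      rw [norm_smul, hxnorm, mul_one]
    have h3 := hxA n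
    rw [hnorm2] at h3
    linarith
  have hupos : (0:ℝ) < ‖uvec (xs n)‖ := norm_pos_iff.2 hune
  -- inner products with the residual vector
  have hux : (⟪uvec (xs n), xs n⟫ : ℂ) = 0 := by
    simp only [huvec]
    simp only [inner_sub_left, inner_smul_left, hxx n, mul_one, inner_conj_symm, sub_self]
  have huA : (⟪uvec (xs n), A (xs n)⟫ : ℂ)
      = ((‖A (xs n)‖ ^ 2 : ℝ) : ℂ) - ((‖(⟪xs n, A (xs n)⟫ : ℂ)‖ ^ 2 : ℝ) : ℂ) := by
    simp only [huvec]
    simp only [inner_sub_left, inner_smul_left]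
    rw [@inner_self_eq_norm_sq_to_K ℂ, RCLike.conj_mul]
    norm_cast
  have huu : (‖uvec (xs n)‖ ^ 2 : ℝ) = ‖A (xs n)‖ ^ 2 - ‖(⟪xs n, A (xs n)⟫ : ℂ)‖ ^ 2 := by
    have hself : (⟪uvec (xs n), uvec (xs n)⟫ : ℂ)
        = (⟪uvec (xs n), A (xs n)⟫ : ℂ) := by
      conv_lhs => rw [huvec]
      rw [show (⟪uvec (xs n), A (xs n) - ⟪xs n, A (xs n)⟫ • xs n⟫ : ℂ)
        = ⟪uvec (xs n), A (xs n)⟫ - ⟪xs n, A (xs n)⟫ * ⟪uvec (xs n), xs n⟫ by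
          rw [inner_sub_right, inner_smul_right], hux, mul_zero, sub_zero]
    rw [@inner_self_eq_norm_sq_to_K ℂ, huA] at hself
    have h4 := congrArg Complex.re hself
    simpa [← Complex.ofReal_pow, ← Complex.ofReal_sub] using h4
  have hval : (⟪ys n, A (xs n)⟫ : ℂ) = ((‖uvec (xs n)‖ : ℝ) : ℂ) := by
    have hysn : ys n = ((‖uvec (xs n)‖ : ℂ))⁻¹ • uvec (xs n) := by
      simp only [hys, hpicky, if_neg hune]
    rw [hysn, inner_smul_left, huA]
    rw [show (starRingEnd ℂ) (((‖uvec (xs n)‖ : ℝ) : ℂ))⁻¹ = ((‖uvec (xs n)‖ : ℂ))⁻¹ by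
      rw [map_inv₀, Complex.conj_ofReal]]
    have : ((‖A (xs n)‖ ^ 2 : ℝ) : ℂ) - ((‖(⟪xs n, A (xs n)⟫ : ℂ)‖ ^ 2 : ℝ) : ℂ)
        = ((‖uvec (xs n)‖ ^ 2 : ℝ) : ℂ) := by
      rw [huu]
      push_cast
      ring
    rw [this]
    have hne : ((‖uvec (xs n)‖ : ℝ) : ℂ) ≠ 0 := by
      simp only [ne_eq, Complex.ofReal_eq_zero]
      exact hupos.ne'
    push_cast
    field_simp
  -- contradiction
  have h2' : ‖uvec (xs n)‖ < δ / 2 := by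
    rw [hval] at h2
    rwa [Complex.norm_real, Real.norm_eq_abs, abs_of_pos hupos] at h2
  have hAxn := hxA n
  nlinarith [huu, h1, h2', hδ, norm_nonneg (A (xs n)),
    norm_nonneg ((⟪xs n, A (xs n)⟫ : ℂ))]

end LieNorm

/-- For an infinite dimensional separable Hilbert space `H`, the Lie
normalizer of `K(H)` in `B(H)` is `ℂ·1 + K(H)`. -/
theorem lieNormalizer_compactOperators
    (H : Type*) [NormedAddCommGroup H] [InnerProductSpace ℂ H] [CompleteSpace H]
    [TopologicalSpace.SeparableSpace H] (hinf : ¬ FiniteDimensional ℂ H) :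
    {T : H →L[ℂ] H | ∀ S : H →L[ℂ] H, IsCompactOperator ⇑(T * S - S * T)} =
      {T : H →L[ℂ] H | ∃ (c : ℂ) (K : H →L[ℂ] H), IsCompactOperator ⇑K ∧
        T = c • (1 : H →L[ℂ] H) + K} := by
  ext T
  simp only [Set.mem_setOf_eq]
  constructor
  · intro h
    exact LieNorm.scalar_add_compact_of_commutators_compact hinf h
  · rintro ⟨c, K, hK, rfl⟩ S
    have heq : (c • (1 : H →L[ℂ] H) + K) * S - S * (c • 1 + K) = K * S - S * K := by
      simp only [add_mul, mul_add, smul_mul_assoc, mul_smul_comm, one_mul, mul_one]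
      abel
    rw [heq]
    have h1 : IsCompactOperator (⇑K ∘ ⇑S) := hK.comp_clm S
    have h2 : IsCompactOperator (⇑S ∘ ⇑K) := hK.clm_comp S
    have hfun : ⇑(K * S - S * K) = (⇑K ∘ ⇑S) - (⇑S ∘ ⇑K) := by
      funext z
      simp [ContinuousLinearMap.mul_apply]
    rw [hfun]
    exact h1.sub h2
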